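/- Fix τ ∈ (0,1). If y < y*_τ, then y < f(y) ≤ y*_τ. -/

import Mathlib

open MeasureTheory ProbabilityTheory Filter Set

noncomputable section

/-- sign function: `1` if `0 ≤ x`, `−1` otherwise. -/
def sgn (x : ℝ) : ℝ := if 0 ≤ x then 1 else -1

/-- `pr^π(Y ≤ y)`, the CDF of the outcome induced by the regime `(π₁, π₂)`:
`∫∫ F_ε(y − m(h₂) − π₂(h₂) c(h₂)) κ((h₁, π₁(h₁)), dh₂) μ(dh₁)`. -/
def prPi {X1 X2 : Type*} [MeasurableSpace X1] [MeasurableSpace X2]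
    (μ : Measure X1) (κ : Kernel (X1 × ℝ) X2) (m c : X2 → ℝ) (Feps : ℝ → ℝ)
    (π₁ : X1 → ℝ) (π₂ : X2 → ℝ) (y : ℝ) : ℝ :=
  ∫ h₁, (∫ h₂, Feps (y - m h₂ - π₂ h₂ * c h₂) ∂(κ (h₁, π₁ h₁))) ∂μ

/-- `I(y, F, G) = ∫ F(y − u − |v|) dG(u,v)`. -/
def Ifun (y : ℝ) (F : ℝ → ℝ) (G : Measure (ℝ × ℝ)) : ℝ :=
  ∫ p, F (y - p.1 - |p.2|) ∂G

/-- `G(·,· | h₁, a₁)`: the pushforward of `κ((h₁,a₁),·)` under `h₂ ↦ (m h₂, c h₂)`. -/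
def Gdist {X1 X2 : Type*} [MeasurableSpace X1] [MeasurableSpace X2]
    (κ : Kernel (X1 × ℝ) X2) (m c : X2 → ℝ) (h₁ : X1) (a₁ : ℝ) : Measure (ℝ × ℝ) :=
  (κ (h₁, a₁)).map (fun h₂ => (m h₂, c h₂))

/-- `d(h₁, y) = I(y, F_ε, G(·,·|h₁,−1)) − I(y, F_ε, G(·,·|h₁,1))`. -/
def dfun {X1 X2 : Type*} [MeasurableSpace X1] [MeasurableSpace X2]
    (κ : Kernel (X1 × ℝ) X2) (m c : X2 → ℝ) (Feps : ℝ → ℝ) (h₁ : X1) (y : ℝ) : ℝ :=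
  Ifun y Feps (Gdist κ m c h₁ (-1)) - Ifun y Feps (Gdist κ m c h₁ 1)

/-- `Γ(h₁, y) = sgn(d(h₁, y))`. -/
def Gam {X1 X2 : Type*} [MeasurableSpace X1] [MeasurableSpace X2]
    (κ : Kernel (X1 × ℝ) X2) (m c : X2 → ℝ) (Feps : ℝ → ℝ) (h₁ : X1) (y : ℝ) : ℝ :=
  sgn (dfun κ m c Feps h₁ y)

/-- `q^π(τ) = inf{y : pr^π(Y ≤ y) ≥ τ}`. -/
def quant {X1 X2 : Type*} [MeasurableSpace X1] [MeasurableSpace X2]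
    (μ : Measure X1) (κ : Kernel (X1 × ℝ) X2) (m c : X2 → ℝ) (Feps : ℝ → ℝ)
    (τ : ℝ) (π₁ : X1 → ℝ) (π₂ : X2 → ℝ) : ℝ :=
  sInf {y : ℝ | τ ≤ prPi μ κ m c Feps π₁ π₂ y}

/-- `y*_τ = inf{y : pr^{(Γ(·,y), π₂*)}(Y ≤ y) ≥ τ}` where `π₂*(h₂) = sgn(c(h₂))`. -/
def ystar {X1 X2 : Type*} [MeasurableSpace X1] [MeasurableSpace X2]
    (μ : Measure X1) (κ : Kernel (X1 × ℝ) X2) (m c : X2 → ℝ) (Feps : ℝ → ℝ)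
    (τ : ℝ) : ℝ :=
  sInf {y : ℝ |
    τ ≤ prPi μ κ m c Feps (fun h₁ => Gam κ m c Feps h₁ y) (fun h₂ => sgn (c h₂)) y}

/-- `f(y) = q^{(Γ(·,y), π₂*)}(τ)`. -/
def fQIQ {X1 X2 : Type*} [MeasurableSpace X1] [MeasurableSpace X2]
    (μ : Measure X1) (κ : Kernel (X1 × ℝ) X2) (m c : X2 → ℝ) (Feps : ℝ → ℝ)
    (τ : ℝ) (y : ℝ) : ℝ :=
  quant μ κ m c Feps τ (fun h₁ => Gam κ m c Feps h₁ y) (fun h₂ => sgn (c h₂))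

/-- fix `τ ∈ (0,1)`. If `y < y*_τ`, then `y < f(y) ≤ y*_τ`. -/
lemma sgn_mul_self' (x : ℝ) : sgn x * x = |x| := by
  unfold sgn
  split
  · rw [abs_of_nonneg ‹_›, one_mul]
  · rw [abs_of_neg (lt_of_not_ge ‹_›)]; ring

lemma integrable_of_mem_Icc' {α : Type*} [MeasurableSpace α] (ν : Measure α)
    [IsProbabilityMeasure ν] {f : α → ℝ} (hmeas : AEStronglyMeasurable f ν)
    (h01 : ∀ x, f x ∈ Icc (0:ℝ) 1) : Integrable f ν := by
  refine (integrable_const (1:ℝ)).mono' hmeas (ae_of_all _ fun x => ?_)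
  simp only [Real.norm_eq_abs, abs_le]
  exact ⟨by linarith [(h01 x).1], (h01 x).2⟩

theorem stmt9
    {X1 X2 : Type*} [MeasurableSpace X1] [MeasurableSpace X2]
    [StandardBorelSpace X1] [StandardBorelSpace X2]
    (μ : Measure X1) [IsProbabilityMeasure μ]
    (κ : Kernel (X1 × ℝ) X2) [IsMarkovKernel κ]
    (m c : X2 → ℝ) (hm : Measurable m) (hc : Measurable c)
    (Feps : ℝ → ℝ) (hF_mono : Monotone Feps)
    (hF_rc : ∀ x : ℝ, ContinuousWithinAt Feps (Ici x) x)
    (hF_bot : Tendsto Feps atBot (nhds 0)) (hF_top : Tendsto Feps atTop (nhds 1))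
    (hF_mem : ∀ x : ℝ, Feps x ∈ Icc (0:ℝ) 1)
    (τ : ℝ) (hτ : τ ∈ Ioo (0:ℝ) 1) (y : ℝ) (hy : y < ystar μ κ m c Feps τ) :
    y < fQIQ μ κ m c Feps τ y ∧ fQIQ μ κ m c Feps τ y ≤ ystar μ κ m c Feps τ := by
  obtain ⟨hτ0, hτ1⟩ := hτ
  have hFm : Measurable Feps := hF_mono.measurable
  -- the inner integrand with optimal second-stage rule
  set ψ : ℝ → X2 → ℝ := fun z h₂ => Feps (z - m h₂ - |c h₂|) with hψdef
  have hψmeas : ∀ z, Measurable (ψ z) :=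
    fun z => hFm.comp ((measurable_const.sub hm).sub hc.abs)
  have hψ01 : ∀ z h₂, ψ z h₂ ∈ Icc (0:ℝ) 1 := fun z h₂ => hF_mem _
  have hψint : ∀ (z : ℝ) (h₁ : X1) (a : ℝ), Integrable (ψ z) (κ (h₁, a)) := fun z h₁ a =>
    integrable_of_mem_Icc' _ (hψmeas z).aestronglyMeasurable (hψ01 z)
  set J : ℝ → ℝ → X1 → ℝ := fun a z h₁ => ∫ h₂, ψ z h₂ ∂(κ (h₁, a)) with hJdef
  have hJ01 : ∀ a z h₁, J a z h₁ ∈ Icc (0:ℝ) 1 := by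
    intro a z h₁
    constructor
    · exact integral_nonneg fun h₂ => (hψ01 z h₂).1
    · calc ∫ h₂, ψ z h₂ ∂(κ (h₁, a)) ≤ ∫ _, (1:ℝ) ∂(κ (h₁, a)) :=
            integral_mono (hψint z h₁ a) (integrable_const 1) (fun h₂ => (hψ01 z h₂).2)
        _ = 1 := by simp
  have hJmeas : ∀ a z, Measurable (fun h₁ => J a z h₁) := by
    intro a z
    have hsm : StronglyMeasurable (fun p : X1 × X2 => ψ z p.2) :=
      ((hψmeas z).comp measurable_snd).stronglyMeasurable
    have h := hsm.integral_kernel_prod_right'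
      (κ := κ.comap (fun h₁ : X1 => (h₁, a)) (measurable_id.prodMk measurable_const))
    simp only [Kernel.comap_apply] at h
    exact h.measurable
  have hJmono : ∀ a h₁, Monotone (fun z => J a z h₁) := fun a h₁ z z' h =>
    integral_mono (hψint z h₁ a) (hψint z' h₁ a)
      (fun h₂ => hF_mono (sub_le_sub_right (sub_le_sub_right h _) _))
  -- rewriting Ifun/Gdist as J
  have hIfun : ∀ (z : ℝ) (h₁ : X1) (a : ℝ), Ifun z Feps (Gdist κ m c h₁ a) = J a z h₁ := by
    intro z h₁ a
    unfold Ifun Gdist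
    have hfm : AEStronglyMeasurable (fun p : ℝ × ℝ => Feps (z - p.1 - |p.2|))
        ((κ (h₁, a)).map (fun h₂ => (m h₂, c h₂))) := by
      apply Measurable.aestronglyMeasurable
      exact hFm.comp ((measurable_const.sub measurable_fst).sub measurable_snd.abs)
    rw [integral_map (hm.prodMk hc).aemeasurable hfm]
  have hdfun : ∀ (h₁ : X1) (w : ℝ), dfun κ m c Feps h₁ w = J (-1) w h₁ - J 1 w h₁ := by
    intro h₁ w; unfold dfun; rw [hIfun, hIfun]
  have hdmeas : ∀ w : ℝ, Measurable (fun h₁ => dfun κ m c Feps h₁ w) := by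
    intro w
    simp only [hdfun]
    exact (hJmeas (-1) w).sub (hJmeas 1 w)
  have hJGam : ∀ (w z : ℝ) (h₁ : X1), J (Gam κ m c Feps h₁ w) z h₁ =
      if 0 ≤ dfun κ m c Feps h₁ w then J 1 z h₁ else J (-1) z h₁ := by
    intro w z h₁
    unfold Gam sgn
    split <;> rfl
  have hmin : ∀ (z : ℝ) (h₁ : X1),
      J (Gam κ m c Feps h₁ z) z h₁ = min (J (-1) z h₁) (J 1 z h₁) := by
    intro z h₁
    rw [hJGam]
    have hd := hdfun h₁ z
    split
    · rw [min_eq_right]; linarith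
    · rw [min_eq_left]; push_neg at *; linarith
  have hGamy_ge : ∀ (w z : ℝ) (h₁ : X1),
      min (J (-1) z h₁) (J 1 z h₁) ≤ J (Gam κ m c Feps h₁ w) z h₁ := by
    intro w z h₁
    rw [hJGam]
    split
    exacts [min_le_right _ _, min_le_left _ _]
  -- outer integrand for regime (Γ(·,w), π₂*)
  set P : ℝ → ℝ → ℝ := fun w z => ∫ h₁, J (Gam κ m c Feps h₁ w) z h₁ ∂μ with hPdef
  have hGmeas : ∀ w z : ℝ, Measurable (fun h₁ => J (Gam κ m c Feps h₁ w) z h₁) := by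
    intro w z
    have : (fun h₁ => J (Gam κ m c Feps h₁ w) z h₁) =
        fun h₁ => if 0 ≤ dfun κ m c Feps h₁ w then J 1 z h₁ else J (-1) z h₁ :=
      funext fun h₁ => hJGam w z h₁
    rw [this]
    exact Measurable.ite (measurableSet_le measurable_const (hdmeas w))
      (hJmeas 1 z) (hJmeas (-1) z)
  have hGint : ∀ w z : ℝ, Integrable (fun h₁ => J (Gam κ m c Feps h₁ w) z h₁) μ := fun w z =>
    integrable_of_mem_Icc' μ (hGmeas w z).aestronglyMeasurable (fun h₁ => hJ01 _ _ _)
  have hpr : ∀ (π₁ : X1 → ℝ) (z : ℝ),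
      prPi μ κ m c Feps π₁ (fun h₂ => sgn (c h₂)) z = ∫ h₁, J (π₁ h₁) z h₁ ∂μ := by
    intro π₁ z
    unfold prPi
    simp only [sgn_mul_self', hJdef, hψdef]
  have hprP : ∀ w z : ℝ,
      prPi μ κ m c Feps (fun h₁ => Gam κ m c Feps h₁ w) (fun h₂ => sgn (c h₂)) z = P w z :=
    fun w z => hpr _ z
  -- monotonicity of P w
  have hPmono : ∀ w, Monotone (P w) := fun w z z' h =>
    integral_mono (hGint w z) (hGint w z') fun h₁ => hJmono _ _ h
  -- right continuity of J and P (sequentially, from the right)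
  have hJ_rc : ∀ (a : ℝ) (h₁ : X1) (x : ℝ) (u : ℕ → ℝ), (∀ n, x ≤ u n) →
      Tendsto u atTop (nhds x) →
      Tendsto (fun n => J a (u n) h₁) atTop (nhds (J a x h₁)) := by
    intro a h₁ x u hu hux
    refine tendsto_integral_of_dominated_convergence (fun _ => (1:ℝ))
      (fun n => (hψmeas (u n)).aestronglyMeasurable) (integrable_const 1)
      (fun n => ae_of_all _ fun h₂ => ?_) (ae_of_all _ fun h₂ => ?_)
    · simp only [Real.norm_eq_abs, abs_le]
      exact ⟨by linarith [(hψ01 (u n) h₂).1], (hψ01 (u n) h₂).2⟩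
    · have harg : Tendsto (fun n => u n - m h₂ - |c h₂|) atTop
          (nhdsWithin (x - m h₂ - |c h₂|) (Ici (x - m h₂ - |c h₂|))) := by
        apply tendsto_nhdsWithin_of_tendsto_nhds_of_eventually_within
        · exact (hux.sub_const _).sub_const _
        · exact Eventually.of_forall fun n => by
            simp only [mem_Ici]; linarith [hu n]
      exact (hF_rc _).tendsto.comp harg
  have hP_rc : ∀ (w x : ℝ) (u : ℕ → ℝ), (∀ n, x ≤ u n) → Tendsto u atTop (nhds x) →
      Tendsto (fun n => P w (u n)) atTop (nhds (P w x)) := by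
    intro w x u hu hux
    refine tendsto_integral_of_dominated_convergence (fun _ => (1:ℝ))
      (fun n => (hGmeas w (u n)).aestronglyMeasurable) (integrable_const 1)
      (fun n => ae_of_all _ fun h₁ => ?_) (ae_of_all _ fun h₁ => ?_)
    · simp only [Real.norm_eq_abs, abs_le]
      exact ⟨by linarith [(hJ01 (Gam κ m c Feps h₁ w) (u n) h₁).1],
        (hJ01 (Gam κ m c Feps h₁ w) (u n) h₁).2⟩
    · exact hJ_rc _ h₁ x u hu hux
  -- limits at +∞ (along ℕ) for J
  have hJ_top : ∀ (a : ℝ) (h₁ : X1),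
      Tendsto (fun n : ℕ => J a (n : ℝ) h₁) atTop (nhds 1) := by
    intro a h₁
    have h1 : Tendsto (fun n : ℕ => ∫ h₂, ψ (n:ℝ) h₂ ∂(κ (h₁, a))) atTop
        (nhds (∫ _, (1:ℝ) ∂(κ (h₁, a)))) := by
      refine tendsto_integral_of_dominated_convergence (fun _ => (1:ℝ))
        (fun n => (hψmeas _).aestronglyMeasurable) (integrable_const 1)
        (fun n => ae_of_all _ fun h₂ => ?_) (ae_of_all _ fun h₂ => ?_)
      · simp only [Real.norm_eq_abs, abs_le]
        exact ⟨by linarith [(hψ01 ((n:ℕ):ℝ) h₂).1], (hψ01 ((n:ℕ):ℝ) h₂).2⟩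
      · have harg : Tendsto (fun n : ℕ => (n:ℝ) - m h₂ - |c h₂|) atTop atTop := by
          apply tendsto_atTop_add_const_right
          exact tendsto_atTop_add_const_right _ _ tendsto_natCast_atTop_atTop
        exact hF_top.comp harg
    simpa using h1
  -- limits at −∞ for J
  have hJ_bot : ∀ (a : ℝ) (h₁ : X1),
      Tendsto (fun n : ℕ => J a (-(n:ℝ)) h₁) atTop (nhds 0) := by
    intro a h₁
    have h1 : Tendsto (fun n : ℕ => ∫ h₂, ψ (-(n:ℝ)) h₂ ∂(κ (h₁, a))) atTop
        (nhds (∫ _, (0:ℝ) ∂(κ (h₁, a)))) := by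
      refine tendsto_integral_of_dominated_convergence (fun _ => (1:ℝ))
        (fun n => (hψmeas _).aestronglyMeasurable) (integrable_const 1)
        (fun n => ae_of_all _ fun h₂ => ?_) (ae_of_all _ fun h₂ => ?_)
      · simp only [Real.norm_eq_abs, abs_le]
        exact ⟨by linarith [(hψ01 (-((n:ℕ):ℝ)) h₂).1], (hψ01 (-((n:ℕ):ℝ)) h₂).2⟩
      · have harg : Tendsto (fun n : ℕ => -(n:ℝ) - m h₂ - |c h₂|) atTop atBot := by
          apply tendsto_atBot_add_const_right
          apply tendsto_atBot_add_const_right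
          exact tendsto_neg_atBot_iff.mpr tendsto_natCast_atTop_atTop
        exact hF_bot.comp harg
    simpa using h1
  -- diagonal tends to 1
  have hdiag_eq : ∀ z : ℝ, P z z = ∫ h₁, min (J (-1) z h₁) (J 1 z h₁) ∂μ := by
    intro z
    exact integral_congr_ae (ae_of_all _ fun h₁ => hmin z h₁)
  have hmin_meas : ∀ z : ℝ, Measurable fun h₁ => min (J (-1) z h₁) (J 1 z h₁) :=
    fun z => (hJmeas (-1) z).min (hJmeas 1 z)
  have hdiag_top : Tendsto (fun n : ℕ => P (n:ℝ) (n:ℝ)) atTop (nhds 1) := by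
    have heq : (fun n : ℕ => P (n:ℝ) (n:ℝ)) =
        fun n : ℕ => ∫ h₁, min (J (-1) (n:ℝ) h₁) (J 1 (n:ℝ) h₁) ∂μ :=
      funext fun n => hdiag_eq _
    rw [heq]
    have h1 : Tendsto (fun n : ℕ => ∫ h₁, min (J (-1) (n:ℝ) h₁) (J 1 (n:ℝ) h₁) ∂μ) atTop
        (nhds (∫ _, (1:ℝ) ∂μ)) := by
      refine tendsto_integral_of_dominated_convergence (fun _ => (1:ℝ))
        (fun n => (hmin_meas _).aestronglyMeasurable) (integrable_const 1)
        (fun n => ae_of_all _ fun h₁ => ?_) (ae_of_all _ fun h₁ => ?_)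
      · simp only [Real.norm_eq_abs, abs_le]
        constructor
        · have := (hJ01 (-1) (n:ℝ) h₁).1; have := (hJ01 1 (n:ℝ) h₁).1
          simp only [le_min_iff]; constructor <;> linarith
        · exact le_trans (min_le_left _ _) (hJ01 (-1) (n:ℝ) h₁).2
      · have := (hJ_top (-1) h₁).min (hJ_top 1 h₁)
        simpa using this
    simpa using h1
  -- the bounding function Q and its limit at −∞
  set Q : ℝ → ℝ := fun z => ∫ h₁, (J (-1) z h₁ + J 1 z h₁) ∂μ with hQdef
  have hQint : ∀ (a z : ℝ), Integrable (fun h₁ => J a z h₁) μ := fun a z =>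
    integrable_of_mem_Icc' μ (hJmeas a z).aestronglyMeasurable (fun h₁ => hJ01 _ _ _)
  have hQmono : Monotone Q := by
    intro z z' h
    exact integral_mono ((hQint (-1) z).add (hQint 1 z)) ((hQint (-1) z').add (hQint 1 z'))
      fun h₁ => add_le_add (hJmono _ _ h) (hJmono _ _ h)
  have hPleQ : ∀ w z : ℝ, P w z ≤ Q z := by
    intro w z
    refine integral_mono (hGint w z) ((hQint (-1) z).add (hQint 1 z)) fun h₁ => ?_
    rw [hJGam]
    split
    · exact le_add_of_nonneg_left (hJ01 (-1) z h₁).1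
    · exact le_add_of_nonneg_right (hJ01 1 z h₁).1
  have hQbot : Tendsto (fun n : ℕ => Q (-(n:ℝ))) atTop (nhds 0) := by
    have h1 : Tendsto (fun n : ℕ => ∫ h₁, (J (-1) (-(n:ℝ)) h₁ + J 1 (-(n:ℝ)) h₁) ∂μ) atTop
        (nhds (∫ _, (0:ℝ) ∂μ)) := by
      refine tendsto_integral_of_dominated_convergence (fun _ => (2:ℝ))
        (fun n => ((hJmeas _ _).add (hJmeas _ _)).aestronglyMeasurable) (integrable_const 2)
        (fun n => ae_of_all _ fun h₁ => ?_) (ae_of_all _ fun h₁ => ?_)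
      · simp only [Real.norm_eq_abs, abs_le]
        have a1 := hJ01 (-1) (-(n:ℝ)) h₁; have a2 := hJ01 1 (-(n:ℝ)) h₁
        constructor <;> [linarith [a1.1, a2.1]; linarith [a1.2, a2.2]]
      · have := (hJ_bot (-1) h₁).add (hJ_bot 1 h₁)
        simpa using this
    simpa using h1
  -- the two sets
  set T : Set ℝ := {z | τ ≤ P z z} with hTdef
  set A : Set ℝ := {z | τ ≤ P y z} with hAdef
  have hystar : ystar μ κ m c Feps τ = sInf T := by
    unfold ystar
    congr 1
    ext z
    simp only [mem_setOf_eq, hprP, hTdef]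
  have hfQ : fQIQ μ κ m c Feps τ y = sInf A := by
    unfold fQIQ quant
    congr 1
    ext z
    simp only [mem_setOf_eq, hprP, hAdef]
  -- T is nonempty
  have hT_ne : T.Nonempty := by
    have := (Filter.Tendsto.eventually_const_le hτ1 hdiag_top).exists
    obtain ⟨n, hn⟩ := this
    exact ⟨(n:ℝ), hn⟩
  -- lower bound for both sets
  obtain ⟨n₀, hn₀⟩ := (Filter.Tendsto.eventually_lt_const hτ0 hQbot).exists
  have hbelow : ∀ w z : ℝ, z ≤ -(n₀:ℝ) → P w z < τ := fun w z hz =>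
    lt_of_le_of_lt (le_trans (hPleQ w z) (hQmono hz)) hn₀
  have hT_bdd : BddBelow T := by
    refine ⟨-(n₀:ℝ), fun z hz => ?_⟩
    by_contra h
    push_neg at h
    exact absurd hz (by simp only [hTdef, mem_setOf_eq, not_le]; exact hbelow z z h.le)
  have hA_bdd : BddBelow A := by
    refine ⟨-(n₀:ℝ), fun z hz => ?_⟩
    by_contra h
    push_neg at h
    exact absurd hz (by simp only [hAdef, mem_setOf_eq, not_le]; exact hbelow y z h.le)
  -- T ⊆ A
  have hTA : T ⊆ A := by
    intro z hz
    have : P z z ≤ P y z := by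
      refine integral_mono (hGint z z) (hGint y z) fun h₁ => ?_
      rw [hmin z h₁]
      exact hGamy_ge y z h₁
    exact le_trans hz this
  have hA_ne : A.Nonempty := hT_ne.mono hTA
  -- f(y) ≤ y*
  have h_le : sInf A ≤ sInf T := csInf_le_csInf hA_bdd hT_ne hTA
  -- P y y < τ
  have hPyy : P y y < τ := by
    by_contra h
    push_neg at h
    have : ystar μ κ m c Feps τ ≤ y := hystar ▸ csInf_le hT_bdd h
    exact absurd hy (not_lt.mpr this)
  -- sInf A ∈ A
  have hmemA : sInf A ∈ A := by
    obtain ⟨u, hu_anti, hu_tend, hu_mem⟩ := exists_seq_tendsto_sInf hA_ne hA_bdd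
    have hge : ∀ n, sInf A ≤ u n := fun n => csInf_le hA_bdd (hu_mem n)
    have := hP_rc y (sInf A) u hge hu_tend
    exact ge_of_tendsto this (Eventually.of_forall fun n => hu_mem n)
  -- y < sInf A
  have hlt : y < sInf A := by
    by_contra h
    push_neg at h
    have : τ ≤ P y y := le_trans hmemA (hPmono y h)
    linarith
  exact ⟨hfQ ▸ hlt, by rw [hfQ, hystar]; exact h_le⟩
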